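/- Let F be a finite field with q elements and let M be a nonzero 2×2 matrix over F with det M = 0. Then the set {DM : D ∈ M₂(F)} has exactly q² elements. -/

import Mathlib

/-- rank-one row factorization -/
lemma row_factor (F : Type*) [Field F]
    (M : Matrix (Fin 2) (Fin 2) F) (hM : M ≠ 0) (hdet : M.det = 0) :
    ∃ (r : Fin 2 → F) (c d : F), r ≠ 0 ∧ (c, d) ≠ (0, 0) ∧
      (∀ j, M 0 j = c * r j) ∧ (∀ j, M 1 j = d * r j) := by
  rw [Matrix.det_fin_two, sub_eq_zero] at hdet
  by_cases h0 : M 0 ≠ 0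
  · have : ∃ e : F, ∀ j, M 1 j = e * M 0 j := by
      by_cases h00 : M 0 0 ≠ 0
      · refine ⟨M 1 0 / M 0 0, fun j => ?_⟩
        fin_cases j <;> simp only [Fin.isValue, Fin.zero_eta, Fin.mk_one]
        · field_simp
        · field_simp
          linear_combination hdet
      · push_neg at h00
        have h01 : M 0 1 ≠ 0 := by
          intro h1; apply h0; funext j; fin_cases j <;> simp [h00, h1]
        have h10 : M 1 0 = 0 := by
          have h2 : M 0 1 * M 1 0 = 0 := by rw [← hdet, h00]; ring
          exact (mul_eq_zero.mp h2).resolve_left h01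
        refine ⟨M 1 1 / M 0 1, fun j => ?_⟩
        fin_cases j <;> simp only [Fin.isValue, Fin.zero_eta, Fin.mk_one]
        · simp [h10, h00]
        · field_simp
    obtain ⟨e, he⟩ := this
    exact ⟨M 0, 1, e, h0, by simp, fun j => by ring, fun j => by simpa using he j⟩
  · push_neg at h0
    have h1 : M 1 ≠ 0 := by
      intro h1; apply hM; ext i j; fin_cases i <;> simp [h0, h1]
    refine ⟨M 1, 0, 1, h1, by simp, fun j => by simp [h0], fun j => by ring⟩

/-- If `M` is a nonzero `2×2` matrix over a finite field `F` with
`q` elements and `det M = 0`, then the set `{DM : D ∈ M₂(F)}` has exactly `q²`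
elements. -/
theorem card_left_orbit
    (F : Type*) [Field F] [Fintype F] (q : ℕ) (hq : q = Fintype.card F)
    (M : Matrix (Fin 2) (Fin 2) F) (hM : M ≠ 0) (hdet : M.det = 0) :
    Set.ncard {N : Matrix (Fin 2) (Fin 2) F |
      ∃ D : Matrix (Fin 2) (Fin 2) F, N = D * M} = q ^ 2 := by
  obtain ⟨r, c, d, hr, hcd, hc, hd⟩ := row_factor F M hM hdet
  set f : F × F → Matrix (Fin 2) (Fin 2) F :=
    fun p => Matrix.of fun i j => ![p.1, p.2] i * r j with hf
  have hinj : Function.Injective f := by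
    obtain ⟨j, hj⟩ := Function.ne_iff.mp hr
    intro p p' h
    have h1 := congrFun (congrFun h 0) j
    have h2 := congrFun (congrFun h 1) j
    simp [hf, hj] at h1 h2
    exact Prod.ext (h1.resolve_right hj) (h2.resolve_right hj)
  have hset : {N : Matrix (Fin 2) (Fin 2) F |
      ∃ D : Matrix (Fin 2) (Fin 2) F, N = D * M} = Set.range f := by
    ext N
    constructor
    · rintro ⟨D, rfl⟩
      refine ⟨(D 0 0 * c + D 0 1 * d, D 1 0 * c + D 1 1 * d), ?_⟩
      ext i j
      simp [hf, Matrix.mul_apply, Fin.sum_univ_two, hc j, hd j]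
      fin_cases i <;> simp <;> ring
    · rintro ⟨⟨a, b⟩, rfl⟩
      by_cases hc0 : c ≠ 0
      · refine ⟨Matrix.of ![![a / c, 0], ![b / c, 0]], ?_⟩
        ext i j
        simp [hf, Matrix.mul_apply, Fin.sum_univ_two, hc j, hd j]
        fin_cases i <;> simp <;> field_simp <;> ring
      · push_neg at hc0
        have hd0 : d ≠ 0 := by
          intro h; exact hcd (by simp [hc0, h])
        refine ⟨Matrix.of ![![0, a / d], ![0, b / d]], ?_⟩
        ext i j
        simp [hf, Matrix.mul_apply, Fin.sum_univ_two, hc j, hd j]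
        fin_cases i <;> simp <;> field_simp <;> ring
  rw [hset, ← Nat.card_coe_set_eq, Nat.card_range_of_injective hinj]
  simp [hq, Nat.card_eq_fintype_card, Fintype.card_prod, sq]
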